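/- Let d ≥ 8, let μ_d be the partition of d with ⌊d/2⌋ parts equal to 2 and d − 2⌊d/2⌋ parts equal to 1, and let λ_d = (3, 1^{d−3}). Then μ_d does not majorize λ_d, and for every n ≥ 1 the inequality H_{n,μ_d}(x) ≥ H_{n,λ_d}(x) holds for all x ∈ [0,∞)^n. -/

import Mathlib

/-- The complete homogeneous symmetric polynomial `h_{n,k}`, as a function on `ℝ^n`:
the sum of all monomials of total degree `k` in `x 0, …, x (n-1)` (with `h_{n,0} = 1`). -/
noncomputable def hsym (n k : ℕ) (x : Fin n → ℝ) : ℝ :=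
  ∑ d ∈ Finset.Nat.antidiagonalTuple n k, ∏ i, x i ^ d i

/-- `H_{n,λ}`: the term-normalized complete homogeneous symmetric function associated to
a partition given as a list of parts. -/
noncomputable def Hsym (n : ℕ) (lam : List ℕ) (x : Fin n → ℝ) : ℝ :=
  (lam.map fun k => hsym n k x).prod /
    (lam.map fun k => ((n + k - 1).choose k : ℝ)).prod

/-- `mu` majorizes `lam`: every partial sum of `mu` is at least the corresponding
partial sum of `lam`. -/
def Majorizes (mu lam : List ℕ) : Prop :=
  ∀ j : ℕ, (lam.take j).sum ≤ (mu.take j).sum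

lemma hsym_succ (n k : ℕ) (x : Fin (n+1) → ℝ) :
    hsym (n+1) k x = ∑ j ∈ Finset.range (k+1), x 0 ^ j * hsym n (k - j) (Fin.tail x) := by
  have main : hsym (n+1) k x
      = ∑ p ∈ Finset.HasAntidiagonal.antidiagonal k, x 0 ^ p.1 * hsym n p.2 (Fin.tail x) := by
    show ∑ d ∈ Finset.Nat.antidiagonalTuple (n+1) k, ∏ i, x i ^ d i = _
    have h1 : ∀ p ∈ Finset.HasAntidiagonal.antidiagonal k, x 0 ^ p.1 * hsym n p.2 (Fin.tail x)
        = ∑ e ∈ Finset.Nat.antidiagonalTuple n p.2, x 0 ^ p.1 * ∏ i, Fin.tail x i ^ e i := by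
      intro p _
      rw [hsym, Finset.mul_sum]
    rw [Finset.sum_congr rfl h1, Finset.sum_sigma']
    refine Finset.sum_nbij' (fun d => ⟨(d 0, ∑ i, Fin.tail d i), Fin.tail d⟩)
      (fun p => Fin.cons p.1.1 p.2) ?_ ?_ ?_ ?_ ?_
    · intro d hd
      rw [Finset.Nat.mem_antidiagonalTuple] at hd
      simp only [Finset.mem_sigma, Finset.HasAntidiagonal.mem_antidiagonal,
        Finset.Nat.mem_antidiagonalTuple]
      refine ⟨?_, trivial⟩
      rw [← hd, Fin.sum_univ_succ]; rfl
    · intro p hp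
      simp only [Finset.mem_sigma, Finset.HasAntidiagonal.mem_antidiagonal,
        Finset.Nat.mem_antidiagonalTuple] at hp
      rw [Finset.Nat.mem_antidiagonalTuple, Fin.sum_cons, hp.2, hp.1]
    · intro d hd
      exact Fin.cons_self_tail d
    · rintro ⟨⟨a, b⟩, e⟩ hp
      simp only [Finset.mem_sigma, Finset.mem_antidiagonal,
        Finset.Nat.mem_antidiagonalTuple] at hp
      simp only [Fin.cons_zero, Fin.tail_cons]
      obtain ⟨h1, h2⟩ := hp
      subst h2
      rfl
    · intro d hd
      rw [Fin.prod_univ_succ]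
      rfl
  rw [main, ← Finset.Nat.sum_antidiagonal_eq_sum_range_succ
    (fun a b => x 0 ^ a * hsym n b (Fin.tail x))]

lemma hsym_zero (n : ℕ) (x : Fin n → ℝ) : hsym n 0 x = 1 := by
  simp [hsym, Finset.Nat.antidiagonalTuple_zero_right]

lemma hsym_one (n : ℕ) (x : Fin n → ℝ) : hsym n 1 x = ∑ i, x i := by
  induction n with
  | zero => simp [hsym, Finset.Nat.antidiagonalTuple_zero_succ]
  | succ n ih =>
    rw [hsym_succ, Fin.sum_univ_succ]
    simp [Finset.sum_range_succ, hsym_zero, ih, Fin.tail]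
    ring

lemma hsym_two (n : ℕ) (x : Fin n → ℝ) :
    2 * hsym n 2 x = (∑ i, x i) ^ 2 + ∑ i, x i ^ 2 := by
  induction n with
  | zero => simp [hsym, Finset.Nat.antidiagonalTuple_zero_succ]
  | succ n ih =>
    have ih' := ih (Fin.tail x)
    rw [hsym_succ, Fin.sum_univ_succ, Fin.sum_univ_succ (fun i => x i ^ 2)]
    norm_num [Finset.sum_range_succ, hsym_zero, hsym_one]
    have ht : ∀ i, Fin.tail x i = x i.succ := fun i => rfl
    simp only [ht] at ih' ⊢
    linear_combination ih'

lemma hsym_three (n : ℕ) (x : Fin n → ℝ) :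
    6 * hsym n 3 x = (∑ i, x i) ^ 3 + 3 * (∑ i, x i) * (∑ i, x i ^ 2) + 2 * ∑ i, x i ^ 3 := by
  induction n with
  | zero => simp [hsym, Finset.Nat.antidiagonalTuple_zero_succ]
  | succ n ih =>
    have ih' := ih (Fin.tail x)
    have htwo := hsym_two n (Fin.tail x)
    rw [hsym_succ, Fin.sum_univ_succ, Fin.sum_univ_succ (fun i => x i ^ 2),
      Fin.sum_univ_succ (fun i => x i ^ 3)]
    norm_num [Finset.sum_range_succ, hsym_zero, hsym_one, hsym_two]
    have ht : ∀ i, Fin.tail x i = x i.succ := fun i => rfl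
    simp only [ht] at ih' htwo ⊢
    linear_combination ih' + 3 * x 0 * htwo

lemma key_cert (N P s : ℝ) (hN : 1 ≤ N) (hP : 0 ≤ P) (hs : 0 ≤ s) :
    (N+1)^3 * P^5 * ((N+1)*(N+2)*P^3 + 3*N*(N+2)*P*s^2 + 2*N^2*s^3)
      ≤ (N+2) * ((N+1)*P^2 + N*s^2)^4 := by
  have hN0 : (0:ℝ) ≤ N := by linarith
  have key : (N+2) * ((N+2) * ((N+1)*P^2 + N*s^2)^4
      - (N+1)^3 * P^5 * ((N+1)*(N+2)*P^3 + 3*N*(N+2)*P*s^2 + 2*N^2*s^3))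
      = N*s^2*((N+1)^3*(N*s - (N+2)*P)^2*P^4 + N*(N+1)^2*(5*N^2+23*N+24)*s^2*P^4
        + 4*N^2*(N+2)^2*(N+1)*s^4*P^2 + N^3*(N+2)^2*s^6) := by ring
  nlinarith [key, sq_nonneg (N*s - (N+2)*P), mul_nonneg (mul_nonneg hN0 (sq_nonneg s))
      (add_nonneg (add_nonneg (add_nonneg
        (mul_nonneg (mul_nonneg (by positivity : (0:ℝ) ≤ (N+1)^3) (sq_nonneg (N*s - (N+2)*P))) (by positivity : (0:ℝ) ≤ P^4))
        (by positivity : (0:ℝ) ≤ N*(N+1)^2*(5*N^2+23*N+24)*s^2*P^4))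
        (by positivity : (0:ℝ) ≤ 4*N^2*(N+2)^2*(N+1)*s^4*P^2))
        (by positivity : (0:ℝ) ≤ N^3*(N+2)^2*s^6))]

lemma moment_key (n : ℕ) (hn : 1 ≤ n) (x : Fin n → ℝ) (hx : ∀ i, 0 ≤ x i) :
    ((∑ i, x i)^3 + 3*(∑ i, x i)*(∑ i, x i^2) + 2*(∑ i, x i^3)) * (∑ i, x i)^5
        * (n:ℝ)^4 * ((n:ℝ)+1)^4
      ≤ (n:ℝ)^6 * ((n:ℝ)+1) * ((n:ℝ)+2) * ((∑ i, x i)^2 + ∑ i, x i^2)^4 := by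
  set ν : ℝ := (n:ℝ) with hνdef
  have hν : (1:ℝ) ≤ ν := by rw [hνdef]; exact_mod_cast hn
  have hν0 : ν ≠ 0 := by linarith
  have hνpos : 0 < ν := by linarith
  set P : ℝ := ∑ i, x i with hPdef
  set Q : ℝ := ∑ i, x i^2 with hQdef
  set R : ℝ := ∑ i, x i^3 with hRdef
  have hP : 0 ≤ P := Finset.sum_nonneg fun i _ => hx i
  have hCS : P^2 ≤ ν*Q := by
    have := sq_sum_le_card_mul_sum_sq (s := Finset.univ) (f := x)
    simpa [hPdef, hQdef] using this
  have hV : 0 ≤ Q - P^2/ν := by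
    rw [sub_nonneg, div_le_iff₀ hνpos]
    ring_nf
    ring_nf at hCS
    linarith [hCS]
  set s : ℝ := Real.sqrt (Q - P^2/ν) with hsdef
  have hs : 0 ≤ s := Real.sqrt_nonneg _
  have hs2 : s^2 = Q - P^2/ν := Real.sq_sqrt hV
  have hQs : ν*Q = P^2 + ν*s^2 := by
    rw [hs2, mul_sub, mul_div_cancel₀ _ hν0]; ring
  -- bound on R
  have hR : ν^2*R ≤ P^3 + 3*ν*P*s^2 + ν^2*s^3 := by
    set m : ℝ := P/ν with hmdef
    have hsumy2 : ∑ i, (x i - m)^2 = s^2 := by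
      have expand : ∀ i ∈ Finset.univ, (x i - m)^2 = x i^2 - 2*m*(x i) + m^2 :=
        fun i _ => by ring
      rw [Finset.sum_congr rfl expand]
      rw [Finset.sum_add_distrib, Finset.sum_sub_distrib, ← Finset.mul_sum,
        Finset.sum_const, Finset.card_univ, Fintype.card_fin, nsmul_eq_mul, hs2]
      rw [hmdef]
      field_simp
      ring
    have ybound : ∀ i, x i - m ≤ s := by
      intro i
      have h1 : (x i - m)^2 ≤ s^2 := by
        rw [← hsumy2]
        exact Finset.single_le_sum (f := fun j => (x j - m)^2) (fun j _ => sq_nonneg _) (Finset.mem_univ i)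
      nlinarith [le_abs_self (x i - m), abs_nonneg (x i - m)]
    have hy3 : ∑ i, (x i - m)^3 ≤ s^2 * s := by
      calc ∑ i, (x i - m)^3 ≤ ∑ i, (x i - m)^2 * s := by
            refine Finset.sum_le_sum fun i _ => ?_
            nlinarith [ybound i, sq_nonneg (x i - m)]
        _ = s^2 * s := by rw [← Finset.sum_mul, hsumy2]
    have expand3 : ∑ i, (x i - m)^3 = R - 3*m*Q + 3*m^2*P - ν*m^3 := by
      have e : ∀ i ∈ Finset.univ, (x i - m)^3
          = x i^3 - 3*m*(x i^2) + 3*m^2*(x i) - m^3 := fun i _ => by ring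
      rw [Finset.sum_congr rfl e]
      simp only [Finset.sum_sub_distrib, Finset.sum_add_distrib, ← Finset.mul_sum,
        Finset.sum_const, Finset.card_univ, Fintype.card_fin, nsmul_eq_mul]
      try ring
    have step : R ≤ 3*m*Q - 3*m^2*P + ν*m^3 + s^2*s := by linarith [expand3 ▸ hy3]
    have hmul : ν^2*R ≤ ν^2*(3*m*Q - 3*m^2*P + ν*m^3 + s^2*s) :=
      mul_le_mul_of_nonneg_left step (by positivity)
    have hsimp : ν^2*(3*m*Q - 3*m^2*P + ν*m^3 + s^2*s)
        = 3*ν*P*Q - 2*P^3 + ν^2*s^3 := by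
      rw [hmdef]; field_simp; ring
    have h3PQ : 3*P*(ν*Q) = 3*P*(P^2 + ν*s^2) := by rw [hQs]
    rw [hsimp] at hmul
    ring_nf at hmul h3PQ ⊢
    linarith [hmul, h3PQ]
  -- assemble
  have key := key_cert ν P s hν hP hs
  have e0 : (ν+1)*P^2 + ν*s^2 = ν*(P^2+Q) := by
    have : ν*Q = P^2 + ν*s^2 := hQs
    linarith
  have step1 : ν^2*(P^3+3*P*Q+2*R)
      ≤ (ν+1)*(ν+2)*P^3 + 3*ν*(ν+2)*P*s^2 + 2*ν^2*s^3 := by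
    have h3PQ : 3*ν*P*(ν*Q) = 3*ν*P*(P^2 + ν*s^2) := by rw [hQs]
    ring_nf at hR h3PQ ⊢
    linarith [hR, h3PQ]
  calc (P^3+3*P*Q+2*R)*P^5*ν^4*(ν+1)^4
      = ν^2*(ν+1)^4*P^5*(ν^2*(P^3+3*P*Q+2*R)) := by ring
    _ ≤ ν^2*(ν+1)^4*P^5*((ν+1)*(ν+2)*P^3 + 3*ν*(ν+2)*P*s^2 + 2*ν^2*s^3) :=
        mul_le_mul_of_nonneg_left step1 (by positivity)
    _ = ν^2*(ν+1)*((ν+1)^3*P^5*((ν+1)*(ν+2)*P^3 + 3*ν*(ν+2)*P*s^2 + 2*ν^2*s^3)) := by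
        ring
    _ ≤ ν^2*(ν+1)*((ν+2)*((ν+1)*P^2 + ν*s^2)^4) :=
        mul_le_mul_of_nonneg_left key (by positivity)
    _ = ν^2*(ν+1)*((ν+2)*(ν*(P^2+Q))^4) := by rw [e0]
    _ = ν^6*(ν+1)*(ν+2)*(P^2+Q)^4 := by ring

lemma hsym_nonneg (n k : ℕ) (x : Fin n → ℝ) (hx : ∀ i, 0 ≤ x i) : 0 ≤ hsym n k x :=
  Finset.sum_nonneg fun d _ => Finset.prod_nonneg fun i _ => pow_nonneg (hx i) _

lemma choose_two_eq (n : ℕ) : 2 * (n+1).choose 2 = (n+1) * n := by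
  rw [Nat.choose_two_right]
  have h : 2 ∣ (n+1) * n := by
    rcases Nat.even_or_odd n with h | h
    · exact Dvd.dvd.mul_left h.two_dvd _
    · exact Dvd.dvd.mul_right (Odd.add_one h).two_dvd _
  rw [Nat.add_sub_cancel]
  exact Nat.mul_div_cancel' h

lemma choose_three_eq (n : ℕ) : 6 * (n+2).choose 3 = (n+2) * ((n+1) * n) := by
  have h3 : (n+2) * (n+1).choose 2 = (n+2).choose 3 * 3 := Nat.add_one_mul_choose_eq (n+1) 2
  calc 6 * (n+2).choose 3 = 2 * ((n+2).choose 3 * 3) := by ring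
    _ = 2 * ((n+2) * (n+1).choose 2) := by rw [h3]
    _ = (n+2) * (2 * (n+1).choose 2) := by ring
    _ = (n+2) * ((n+1) * n) := by rw [choose_two_eq]

set_option maxHeartbeats 1000000 in
theorem counterexample_partitions (d : ℕ) (hd : 8 ≤ d) :
    ¬ Majorizes (List.replicate (d / 2) 2 ++ List.replicate (d - 2 * (d / 2)) 1)
        (3 :: List.replicate (d - 3) 1) ∧
      ∀ n : ℕ, 1 ≤ n → ∀ x : Fin n → ℝ, (∀ i, 0 ≤ x i) →
        Hsym n (3 :: List.replicate (d - 3) 1) x ≤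
          Hsym n (List.replicate (d / 2) 2 ++ List.replicate (d - 2 * (d / 2)) 1) x := by
  constructor
  · intro h
    have h1 := h 1
    have hm : d / 2 = (d/2 - 1) + 1 := by omega
    rw [hm, List.replicate_succ, List.cons_append] at h1
    simp [List.take] at h1
  · intro n hn x hx
    simp only [Hsym, List.map_cons, List.map_append, List.map_replicate,
      List.prod_cons, List.prod_append, List.prod_replicate]
    simp only [show n + 1 - 1 = n from rfl, show n + 2 - 1 = n + 1 from rfl,
      show n + 3 - 1 = n + 2 from rfl, Nat.choose_one_right]
    rw [mul_div_mul_comm, mul_div_mul_comm, ← div_pow, ← div_pow, ← div_pow]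
    set ν : ℝ := (n:ℝ) with hνdef
    have hν : (1:ℝ) ≤ ν := by rw [hνdef]; exact_mod_cast hn
    have hνpos : (0:ℝ) < ν := by linarith
    set P : ℝ := ∑ i, x i with hPdef
    set Q : ℝ := ∑ i, x i^2 with hQdef
    set R : ℝ := ∑ i, x i^3 with hRdef
    have hP : 0 ≤ P := Finset.sum_nonneg fun i _ => hx i
    have hCS : P^2 ≤ ν*Q := by
      have := sq_sum_le_card_mul_sum_sq (s := Finset.univ) (f := x)
      simpa [hPdef, hQdef] using this
    have h1v : hsym n 1 x = P := hsym_one n x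
    have h2v : hsym n 2 x = (P^2 + Q)/2 := by linarith [hsym_two n x]
    have h3v : hsym n 3 x = (P^3 + 3*P*Q + 2*R)/6 := by linarith [hsym_three n x]
    have c2v : (((n+1).choose 2 : ℕ) : ℝ) = ν*(ν+1)/2 := by
      have h := choose_two_eq n
      have h' : ((2 * (n+1).choose 2 : ℕ) : ℝ) = (((n+1) * n : ℕ) : ℝ) := by
        exact_mod_cast congrArg (Nat.cast : ℕ → ℝ) h
      push_cast at h'
      rw [hνdef]; linarith
    have c3v : (((n+2).choose 3 : ℕ) : ℝ) = ν*(ν+1)*(ν+2)/6 := by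
      have h := choose_three_eq n
      have h' : ((6 * (n+2).choose 3 : ℕ) : ℝ) = (((n+2) * ((n+1) * n) : ℕ) : ℝ) := by
        exact_mod_cast congrArg (Nat.cast : ℕ → ℝ) h
      push_cast at h'
      rw [hνdef]; linarith
    set A : ℝ := hsym n 1 x / ν with hAdef
    set B : ℝ := hsym n 2 x / (((n+1).choose 2 : ℕ) : ℝ) with hBdef
    set C : ℝ := hsym n 3 x / (((n+2).choose 3 : ℕ) : ℝ) with hCdef
    have hc2pos : (0:ℝ) < (((n+1).choose 2 : ℕ) : ℝ) := by rw [c2v]; nlinarith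
    have hc3pos : (0:ℝ) < (((n+2).choose 3 : ℕ) : ℝ) := by rw [c3v]; nlinarith
    have hA : 0 ≤ A := div_nonneg (hsym_nonneg n 1 x hx) (by linarith)
    have hB : 0 ≤ B := div_nonneg (hsym_nonneg n 2 x hx) (by linarith)
    have hAB : A^2 ≤ B := by
      rw [hAdef, hBdef, div_pow, div_le_div_iff₀ (by positivity) hc2pos]
      rw [h1v, h2v, c2v]
      nlinarith [mul_le_mul_of_nonneg_left hCS (le_of_lt hνpos)]
    have hCA : C * A^5 ≤ B^4 := by
      rw [hAdef, hBdef, hCdef, div_pow, div_pow, div_mul_div_comm,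
        div_le_div_iff₀ (by positivity) (by positivity)]
      rw [h1v, h2v, h3v, c2v, c3v]
      have mk := moment_key n hn x hx
      rw [← hPdef, ← hQdef, ← hRdef, ← hνdef] at mk
      ring_nf at mk ⊢
      linarith
    have hd3 : d - 3 = 5 + 2*(d/2 - 4) + (d - 2*(d/2)) := by omega
    calc C * A^(d-3) = (C*A^5) * ((A^2)^(d/2 - 4)) * A^(d - 2*(d/2)) := by
          rw [hd3, pow_add, pow_add, pow_mul]; ring
      _ ≤ (B^4) * (B^(d/2 - 4)) * A^(d - 2*(d/2)) := by
          refine mul_le_mul_of_nonneg_right ?_ (pow_nonneg hA _)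
          exact mul_le_mul hCA (pow_le_pow_left₀ (sq_nonneg A) hAB _)
            (pow_nonneg (sq_nonneg A) _) (pow_nonneg hB 4)
      _ = B^(d/2) * A^(d - 2*(d/2)) := by
          rw [← pow_add]
          congr 2
          omega
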